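/- Let S = conv{e_v : v ∈ V} be the standard simplex and ℓ: S → ℝ satisfy: ℓ(e_v) = ω_v, ℓ(½(e_v+e_w)) = ω_{vw}, ℓ is affine on each corner S_v = S_v^{1/2}, and the weights satisfy ω_v > ω_{vw} for edges (v,w) ∈ E, ω_{uv} > ω_{vw} for consecutive edges, and ω_{vw} = B > all legitimate weights for non-edges. Let v ∈ V be a non-halting vertex with unique successor w along E. Then the conditional-gradient direction d = argmin_{y∈S} ∂_{y−e_v}ℓ(e_v) − e_v equals e_w − e_v, so one conditional gradient step with unit learning rate starting at e_v lands at e_w. -/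

import Mathlib

/-- One conditional-gradient step at a non-halting vertex: for the
Turing-machine loss `ℓ` (vertex values `ω`, midpoint values `ωe`, affine on
each corner `S_u^{1/2}`), the direction minimizing the one-sided directional
derivative at `e_v` over the standard simplex is uniquely `e_w − e_v`, where
`w` is the unique successor of `v`; so one unit-step lands at `e_w`. -/
theorem stmt_14 {V : Type*} [Fintype V] [DecidableEq V]
    (e : V → (V → ℝ)) (he : e = fun u => Pi.single u 1)
    (E : V → V → Prop)
    (ω : V → ℝ) (ωe : V → V → ℝ) (B : ℝ)
    (hsym : ∀ a b, ωe a b = ωe b a)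
    (h1 : ∀ a b, E a b → ω a > ωe a b)
    (h2 : ∀ a b c, E a b → E b c → ωe a b > ωe b c)
    (h3 : ∀ a b, a ≠ b → ¬ E a b → ¬ E b a → ωe a b = B)
    (hBe : ∀ a b, E a b → ωe a b < B)
    (hBv : ∀ a, ω a < B)
    (ℓ : (V → ℝ) → ℝ)
    (hval : ∀ u, ℓ (e u) = ω u)
    (hmid : ∀ a b, a ≠ b → ℓ ((1/2 : ℝ) • (e a + e b)) = ωe a b)
    -- `ℓ` is affine on each corner `S_u = conv({e u} ∪ {½(e u + e t) : t ≠ u})`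
    (haff : ∀ u : V,
      ∀ x ∈ convexHull ℝ (({e u} : Set (V → ℝ)) ∪
        {p | ∃ t, t ≠ u ∧ p = (1/2 : ℝ) • (e u + e t)}),
      ∀ y ∈ convexHull ℝ (({e u} : Set (V → ℝ)) ∪
        {p | ∃ t, t ≠ u ∧ p = (1/2 : ℝ) • (e u + e t)}),
      ∀ l ∈ Set.Icc (0:ℝ) 1,
      ℓ ((1 - l) • x + l • y) = (1 - l) * ℓ x + l * ℓ y)
    -- `v` is non-halting with unique successor `w`
    (v w : V) (hvw : E v w) (hne : v ≠ w) (hdet : ∀ u, E v u → u = w)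
    -- `g z` is the one-sided directional derivative of `ℓ` at `e v` in direction `z − e v`
    (g : (V → ℝ) → ℝ)
    (hg : ∀ z ∈ convexHull ℝ (Set.range e),
      Filter.Tendsto (fun h : ℝ => (ℓ ((1 - h) • e v + h • z) - ℓ (e v)) / h)
        (nhdsWithin 0 (Set.Ioi 0)) (nhds (g z))) :
    (∀ z ∈ convexHull ℝ (Set.range e), g (e w) ≤ g z) ∧
    (∀ z ∈ convexHull ℝ (Set.range e), g z = g (e w) → z = e w) ∧
    e v + (e w - e v) = e w := by
  -- the simplex
  have hsimp : convexHull ℝ (Set.range e) = stdSimplex ℝ V := by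
    have : e = fun i j : V => if i = j then (1:ℝ) else 0 := by
      subst he; funext i j; simp [Pi.single_apply, eq_comm]
    rw [this]
    convert convexHull_basis_eq_stdSimplex (R := ℝ) V using 4 with i j
  -- midpoints
  set m : V → (V → ℝ) := fun u => (1/2 : ℝ) • (e v + e u) with hm
  have hmv : m v = e v := by
    funext j; simp only [hm, Pi.smul_apply, Pi.add_apply, smul_eq_mul]; ring
  set S : Set (V → ℝ) := ({e v} : Set (V → ℝ)) ∪
      {p | ∃ t, t ≠ v ∧ p = (1/2 : ℝ) • (e v + e t)} with hS
  have hmS : ∀ u, m u ∈ S := by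
    intro u
    by_cases hu : u = v
    · subst hu; rw [hmv]; exact Or.inl rfl
    · exact Or.inr ⟨u, hu, rfl⟩
  set C : Set (V → ℝ) := convexHull ℝ S with hC
  have hmC : ∀ u, m u ∈ C := fun u => subset_convexHull ℝ S (hmS u)
  have hCc : Convex ℝ C := convex_convexHull ℝ S
  -- convexity/concavity of ℓ on C
  have hconv : ConvexOn ℝ C ℓ := by
    refine ⟨hCc, fun x hx y hy a b ha hb hab => le_of_eq ?_⟩
    have h := haff v x hx y hy b ⟨hb, by linarith⟩
    rw [show (1 : ℝ) - b = a by linarith] at h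
    rw [h]; simp [smul_eq_mul]
  have hconc : ConcaveOn ℝ C ℓ := by
    refine ⟨hCc, fun x hx y hy a b ha hb hab => ge_of_eq ?_⟩
    have h := haff v x hx y hy b ⟨hb, by linarith⟩
    rw [show (1 : ℝ) - b = a by linarith] at h
    rw [h]; simp [smul_eq_mul]
  -- values at corners
  set c : V → ℝ := fun u => ℓ (m u) with hc
  have hcv : c v = ω v := by rw [hc]; simp only [hmv]; exact hval v
  have hcu : ∀ u, u ≠ v → c u = ωe v u := fun u hu => hmid v u (Ne.symm hu)
  -- representation of half-points
  have hrep : ∀ z ∈ stdSimplex ℝ V, (1/2 : ℝ) • (e v + z) = ∑ u, z u • m u := by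
    intro z hz
    have hrep : (1/2 : ℝ) • (e v + z) = ∑ u, z u • m u := by
      funext j
      have hzj : z j = ∑ u, z u * e u j := by
        subst he
        simp only [Pi.single_apply]
        rw [Finset.sum_eq_single j]
        · simp
        · intro b _ hb; simp [Ne.symm hb]
        · simp
      simp only [Finset.sum_apply, Pi.smul_apply, Pi.add_apply, smul_eq_mul, hm]
      have h2 : (1/2:ℝ) * ((∑ x, z x) * (e v j)) + (1/2) * (∑ x, z x * e x j)
          = ∑ x, z x * (1/2 * (e v j + e x j)) := by
        simp only [Finset.sum_mul, Finset.mul_sum, ← Finset.sum_add_distrib]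
        exact Finset.sum_congr rfl fun x _ => by ring
      rw [← h2, hz.2, ← hzj]
      ring
    exact hrep
  -- Jensen equality for convex combinations of midpoints
  have hjen : ∀ z ∈ stdSimplex ℝ V, ℓ ((1/2 : ℝ) • (e v + z)) = ∑ u, z u * c u := by
    intro z hz
    have hmem : ∀ u ∈ Finset.univ, m u ∈ C := fun u _ => hmC u
    have h0 : ∀ u ∈ (Finset.univ : Finset V), 0 ≤ z u := fun u _ => hz.1 u
    have h1' : ∑ u, z u = 1 := hz.2
    have hle := hconv.map_sum_le h0 h1' hmem
    have hge := hconc.le_map_sum h0 h1' hmem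
    rw [hrep z hz]
    refine (le_antisymm hle hge).trans ?_
    simp [hc, smul_eq_mul]
  -- half-points lie in the corner C
  have hyC : ∀ z ∈ stdSimplex ℝ V, (1/2 : ℝ) • (e v + z) ∈ C := by
    intro z hz
    rw [hrep z hz]
    exact hCc.sum_mem (fun u _ => hz.1 u) hz.2 (fun u _ => hmC u)
  have heC : e v ∈ C := by rw [← hmv]; exact hmC v
  -- the directional derivative formula
  have hgf : ∀ z ∈ stdSimplex ℝ V, g z = 2 * (∑ u, z u * c u) - 2 * ω v := by
    intro z hz
    have hzC : z ∈ convexHull ℝ (Set.range e) := by rw [hsimp]; exact hz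
    have hconst : ∀ h : ℝ, h ∈ Set.Ioo (0:ℝ) (1/2) →
        (ℓ ((1 - h) • e v + h • z) - ℓ (e v)) / h = 2 * (∑ u, z u * c u) - 2 * ω v := by
      intro h hh
      have hl := haff v (e v) heC ((1/2:ℝ) • (e v + z)) (hyC z hz) (2*h)
        ⟨by nlinarith [hh.1], by nlinarith [hh.2]⟩
      have harg : (1 - 2*h) • e v + (2*h) • ((1/2:ℝ) • (e v + z)) = (1 - h) • e v + h • z := by
        funext j; simp only [Pi.smul_apply, Pi.add_apply, smul_eq_mul]; ring
      rw [harg] at hl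
      have h0 : h ≠ 0 := ne_of_gt hh.1
      rw [hl, hjen z hz, hval v]
      field_simp
      ring
    have htt : Filter.Tendsto (fun h : ℝ => (ℓ ((1 - h) • e v + h • z) - ℓ (e v)) / h)
        (nhdsWithin 0 (Set.Ioi 0)) (nhds (2 * (∑ u, z u * c u) - 2 * ω v)) := by
      apply Filter.Tendsto.congr' _ tendsto_const_nhds
      filter_upwards [Ioo_mem_nhdsGT_of_mem
        (⟨le_refl (0:ℝ), by norm_num⟩ : (0:ℝ) ∈ Set.Ico (0:ℝ) (1/2))] with h hh
      exact (hconst h hh).symm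
    exact tendsto_nhds_unique (hg z hzC) htt
  -- coordinates of basis vectors
  have hew : ∀ u j : V, e u j = if u = j then (1:ℝ) else 0 := by
    subst he; intro u j; simp [Pi.single_apply, eq_comm]
  have hws : ∀ u : V, e u ∈ stdSimplex ℝ V := by
    intro u
    refine ⟨fun j => ?_, ?_⟩
    · rw [hew]; split <;> norm_num
    · simp [hew]
  have hsumw : ∀ u : V, ∑ t, e u t * c t = c u := by
    intro u
    rw [Finset.sum_eq_single u]
    · rw [hew]; simp
    · intro b _ hb; rw [hew]; simp [Ne.symm hb]
    · simp
  have hgw : g (e w) = 2 * c w - 2 * ω v := by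
    rw [hgf (e w) (hws w), hsumw w]
  -- weight comparisons
  have hcw : c w = ωe v w := hcu w (Ne.symm hne)
  have hlt : ∀ u, u ≠ w → c w < c u := by
    intro u hu
    by_cases huv : u = v
    · rw [huv, hcv, hcw]; exact h1 v w hvw
    · rw [hcu u huv, hcw]
      by_cases hEvu : E v u
      · exact absurd (hdet u hEvu) hu
      · by_cases hEuv : E u v
        · rw [hsym v u]; exact h2 u v w hEuv hvw
        · rw [h3 v u (Ne.symm huv) hEvu hEuv]; exact hBe v w hvw
  have hle' : ∀ u, c w ≤ c u := by
    intro u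
    by_cases hu : u = w
    · subst hu; exact le_refl _
    · exact (hlt u hu).le
  refine ⟨?_, ?_, by abel⟩
  · intro z hz
    rw [hsimp] at hz
    rw [hgf z hz, hgw]
    have hbound : c w ≤ ∑ u, z u * c u := by
      calc c w = ∑ u, z u * c w := by rw [← Finset.sum_mul, hz.2, one_mul]
        _ ≤ ∑ u, z u * c u := Finset.sum_le_sum fun u _ =>
            mul_le_mul_of_nonneg_left (hle' u) (hz.1 u)
    linarith
  · intro z hz heq
    rw [hsimp] at hz
    rw [hgf z hz, hgw] at heq
    have heq' : ∑ u, z u * c u = c w := by linarith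
    have hsum0 : ∑ u, z u * (c u - c w) = 0 := by
      have hx : ∑ u, z u * (c u - c w) = (∑ u, z u * c u) - (∑ u, z u) * c w := by
        rw [Finset.sum_mul, ← Finset.sum_sub_distrib]
        exact Finset.sum_congr rfl fun u _ => by ring
      rw [hx, hz.2, one_mul, heq']; ring
    have hzero : ∀ u ∈ Finset.univ, z u * (c u - c w) = 0 :=
      (Finset.sum_eq_zero_iff_of_nonneg (fun u _ =>
        mul_nonneg (hz.1 u) (sub_nonneg.2 (hle' u)))).1 hsum0
    have hzu : ∀ u, u ≠ w → z u = 0 := by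
      intro u hu
      have := hzero u (Finset.mem_univ u)
      rcases mul_eq_zero.1 this with h | h
      · exact h
      · exact absurd h (by have := hlt u hu; intro hc; linarith [sub_eq_zero.1 hc ▸ this])
    have hzw : z w = 1 := by
      have := hz.2
      rwa [Finset.sum_eq_single w (fun b _ hb => hzu b hb) (by simp)] at this
    funext j
    by_cases hj : j = w
    · subst hj; rw [hzw, hew]; simp
    · rw [hzu j hj, hew]; simp [Ne.symm hj]
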